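/- Let j, k ∈ ℤ and s ∈ {+1,−1}, and define g : ℝ³ → ℂ (with coordinates (t,x,y)) by g(t,x,y) = exp(s·i·(π/4)·√(j²+k²)·t) · [ sin(π j x / 4)·sin(π k y / 4) − sin(π k x / 4)·sin(π j y / 4) ], where i = √−1. Then: (1) g satisfies the 2D wave equation ∂²g/∂t² = ∂²g/∂x² + ∂²g/∂y² at every point of ℝ³; (2) g(t,x,0) = 0 for all t,x; (3) g(t,4,y) = 0 for all t,y; and (4) g(t,x,x) = 0 for all t,x, so g vanishes on all three sides of the triangle {(x,y) : 0 < y < x < 4}. -/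

import Mathlib

/-- Partial derivative in the first variable `t`. -/
noncomputable def d1 (u : ℝ × ℝ × ℝ → ℂ) : ℝ × ℝ × ℝ → ℂ :=
  fun p => deriv (fun s => u (s, p.2.1, p.2.2)) p.1

/-- Partial derivative in the second variable `x`. -/
noncomputable def d2 (u : ℝ × ℝ × ℝ → ℂ) : ℝ × ℝ × ℝ → ℂ :=
  fun p => deriv (fun s => u (p.1, s, p.2.2)) p.2.1

/-- Partial derivative in the third variable `y`. -/
noncomputable def d3 (u : ℝ × ℝ × ℝ → ℂ) : ℝ × ℝ × ℝ → ℂ :=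
  fun p => deriv (fun s => u (p.1, p.2.1, s)) p.2.2

/-- B-EPGP basis element for the 2D wave equation on the triangle `{0 < y < x < 4}` with
Dirichlet boundary conditions:
`exp(s·i·(π/4)·√(j²+k²)·t) · [sin(πjx/4) sin(πky/4) − sin(πkx/4) sin(πjy/4)]`. -/
noncomputable def triangleBasis (j k : ℤ) (s : ℝ) : ℝ × ℝ × ℝ → ℂ :=
  fun p => Complex.exp ((s : ℂ) * Complex.I * ((Real.pi / 4 : ℝ) : ℂ) *
      (Real.sqrt ((j : ℝ) ^ 2 + (k : ℝ) ^ 2) : ℂ) * (p.1 : ℂ)) *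
    (Complex.sin ((((Real.pi * j * p.2.1 / 4 : ℝ)) : ℂ)) *
        Complex.sin ((((Real.pi * k * p.2.2 / 4 : ℝ)) : ℂ)) -
      Complex.sin ((((Real.pi * k * p.2.1 / 4 : ℝ)) : ℂ)) *
        Complex.sin ((((Real.pi * j * p.2.2 / 4 : ℝ)) : ℂ)))

noncomputable def W (C A B : ℂ) : ℝ × ℝ × ℝ → ℂ := fun p =>
  Complex.exp (C * p.1) *
    (Complex.sin (A * p.2.1) * Complex.sin (B * p.2.2) -
      Complex.sin (B * p.2.1) * Complex.sin (A * p.2.2))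

lemma hd_exp (C : ℂ) (x : ℝ) :
    HasDerivAt (fun t : ℝ => Complex.exp (C * t)) (C * Complex.exp (C * x)) x := by
  have h1 : HasDerivAt (fun z : ℂ => C * z) C (x : ℂ) := by
    simpa using (hasDerivAt_id (x : ℂ)).const_mul C
  have h : HasDerivAt (fun z : ℂ => Complex.exp (C * z)) (C * Complex.exp (C * x)) (x : ℂ) := by
    have := (Complex.hasDerivAt_exp (C * (x : ℂ))).comp (x : ℂ) h1
    exact this.congr_deriv (by ring)
  exact h.comp_ofReal

lemma hd_sin (A : ℂ) (x : ℝ) :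
    HasDerivAt (fun t : ℝ => Complex.sin (A * t)) (A * Complex.cos (A * x)) x := by
  have h1 : HasDerivAt (fun z : ℂ => A * z) A (x : ℂ) := by
    simpa using (hasDerivAt_id (x : ℂ)).const_mul A
  have h : HasDerivAt (fun z : ℂ => Complex.sin (A * z)) (A * Complex.cos (A * x)) (x : ℂ) := by
    have := (Complex.hasDerivAt_sin (A * (x : ℂ))).comp (x : ℂ) h1
    exact this.congr_deriv (by ring)
  exact h.comp_ofReal

lemma hd_cos (A : ℂ) (x : ℝ) :
    HasDerivAt (fun t : ℝ => Complex.cos (A * t)) (-(A * Complex.sin (A * x))) x := by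
  have h1 : HasDerivAt (fun z : ℂ => A * z) A (x : ℂ) := by
    simpa using (hasDerivAt_id (x : ℂ)).const_mul A
  have h : HasDerivAt (fun z : ℂ => Complex.cos (A * z)) (-(A * Complex.sin (A * x))) (x : ℂ) := by
    have := (Complex.hasDerivAt_cos (A * (x : ℂ))).comp (x : ℂ) h1
    exact this.congr_deriv (by ring)
  exact h.comp_ofReal

lemma tb_eq (j k : ℤ) (s : ℝ) :
    triangleBasis j k s =
      W ((s : ℂ) * Complex.I * ((Real.pi / 4 : ℝ) : ℂ) *
          ((Real.sqrt ((j : ℝ) ^ 2 + (k : ℝ) ^ 2) : ℝ) : ℂ))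
        ((Real.pi * j / 4 : ℝ) : ℂ) ((Real.pi * k / 4 : ℝ) : ℂ) := by
  funext p
  simp only [triangleBasis, W]
  push_cast
  ring_nf

lemma W_d1 (C A B : ℂ) : d1 (W C A B) = fun p => C * W C A B p := by
  funext p
  simp only [d1, W]
  exact ((hd_exp C p.1).mul_const _).deriv.trans (by ring)

lemma W_d1d1 (C A B : ℂ) (p : ℝ × ℝ × ℝ) :
    d1 (d1 (W C A B)) p = C ^ 2 * W C A B p := by
  rw [W_d1]
  simp only [d1, W]
  have H := (((hd_exp C p.1).mul_const
    (Complex.sin (A * p.2.1) * Complex.sin (B * p.2.2) -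
      Complex.sin (B * p.2.1) * Complex.sin (A * p.2.2))).const_mul C)
  rw [H.deriv]; ring

lemma W_d2 (C A B : ℂ) : d2 (W C A B) = fun p =>
    Complex.exp (C * p.1) *
      (A * Complex.cos (A * p.2.1) * Complex.sin (B * p.2.2) -
        B * Complex.cos (B * p.2.1) * Complex.sin (A * p.2.2)) := by
  funext p
  simp only [d2, W]
  have H := (((hd_sin A p.2.1).mul_const (Complex.sin (B * p.2.2))).sub
    ((hd_sin B p.2.1).mul_const (Complex.sin (A * p.2.2)))).const_mul (Complex.exp (C * p.1))
  exact H.deriv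

lemma W_d2d2 (C A B : ℂ) (p : ℝ × ℝ × ℝ) :
    d2 (d2 (W C A B)) p = Complex.exp (C * p.1) *
      (B ^ 2 * Complex.sin (B * p.2.1) * Complex.sin (A * p.2.2) -
        A ^ 2 * Complex.sin (A * p.2.1) * Complex.sin (B * p.2.2)) := by
  rw [W_d2]
  simp only [d2]
  have H := ((((hd_cos A p.2.1).const_mul A).mul_const (Complex.sin (B * p.2.2))).sub
    (((hd_cos B p.2.1).const_mul B).mul_const (Complex.sin (A * p.2.2)))).const_mul
    (Complex.exp (C * p.1))
  exact H.deriv.trans (by ring)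

lemma W_d3 (C A B : ℂ) : d3 (W C A B) = fun p =>
    Complex.exp (C * p.1) *
      (Complex.sin (A * p.2.1) * (B * Complex.cos (B * p.2.2)) -
        Complex.sin (B * p.2.1) * (A * Complex.cos (A * p.2.2))) := by
  funext p
  simp only [d3, W]
  have H := (((hd_sin B p.2.2).const_mul (Complex.sin (A * p.2.1))).sub
    ((hd_sin A p.2.2).const_mul (Complex.sin (B * p.2.1)))).const_mul (Complex.exp (C * p.1))
  exact H.deriv

lemma W_d3d3 (C A B : ℂ) (p : ℝ × ℝ × ℝ) :
    d3 (d3 (W C A B)) p = Complex.exp (C * p.1) *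
      (A ^ 2 * Complex.sin (B * p.2.1) * Complex.sin (A * p.2.2) -
        B ^ 2 * Complex.sin (A * p.2.1) * Complex.sin (B * p.2.2)) := by
  rw [W_d3]
  simp only [d3]
  have H := ((((hd_cos B p.2.2).const_mul B).const_mul (Complex.sin (A * p.2.1))).sub
    (((hd_cos A p.2.2).const_mul A).const_mul (Complex.sin (B * p.2.1)))).const_mul
    (Complex.exp (C * p.1))
  exact H.deriv.trans (by ring)

/-- The antisymmetrized Fourier basis element satisfies the 2D wave equation and vanishes on
the three sides `y = 0`, `x = 4`, `y = x` of the triangle `{0 < y < x < 4}`. -/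
theorem triangleBasis_solves_wave_dirichlet
    (j k : ℤ) (s : ℝ) (hs : s = 1 ∨ s = -1) :
    (∀ p : ℝ × ℝ × ℝ,
      d1 (d1 (triangleBasis j k s)) p =
        d2 (d2 (triangleBasis j k s)) p + d3 (d3 (triangleBasis j k s)) p) ∧
    (∀ t x : ℝ, triangleBasis j k s (t, x, 0) = 0) ∧
    (∀ t y : ℝ, triangleBasis j k s (t, 4, y) = 0) ∧
    (∀ t x : ℝ, triangleBasis j k s (t, x, x) = 0) := by
  refine ⟨?_, ?_, ?_, ?_⟩
  · intro p
    rw [tb_eq, W_d1d1, W_d2d2, W_d3d3]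
    set C : ℂ := (s : ℂ) * Complex.I * ((Real.pi / 4 : ℝ) : ℂ) *
      ((Real.sqrt ((j : ℝ) ^ 2 + (k : ℝ) ^ 2) : ℝ) : ℂ) with hCdef
    set A : ℂ := ((Real.pi * j / 4 : ℝ) : ℂ) with hAdef
    set B : ℂ := ((Real.pi * k / 4 : ℝ) : ℂ) with hBdef
    have hs2 : (s : ℂ) ^ 2 = 1 := by rcases hs with h | h <;> subst h <;> norm_num
    have hr : Real.sqrt ((j : ℝ) ^ 2 + (k : ℝ) ^ 2) ^ 2 = (j : ℝ) ^ 2 + (k : ℝ) ^ 2 :=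
      Real.sq_sqrt (by positivity)
    have hC : C ^ 2 = -(A ^ 2 + B ^ 2) := by
      have e1 : C ^ 2 = (s : ℂ) ^ 2 * Complex.I ^ 2 * (((Real.pi / 4 : ℝ) : ℂ)) ^ 2 *
          (((Real.sqrt ((j : ℝ) ^ 2 + (k : ℝ) ^ 2) : ℝ) : ℂ)) ^ 2 := by
        rw [hCdef]; ring
      have h2 : ((Real.sqrt ((j : ℝ) ^ 2 + (k : ℝ) ^ 2) : ℝ) : ℂ) ^ 2 =
          (((j : ℝ) ^ 2 + (k : ℝ) ^ 2 : ℝ) : ℂ) := by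
        rw [← Complex.ofReal_pow, hr]
      rw [e1, hs2, Complex.I_sq, hAdef, hBdef, h2]
      push_cast
      ring
    simp only [W]
    rw [show C ^ 2 = -(A ^ 2 + B ^ 2) from hC]
    ring
  · intro t x
    simp only [triangleBasis]
    norm_num
  · intro t y
    simp only [triangleBasis]
    have h1 : ((Real.pi * j * 4 / 4 : ℝ) : ℂ) = (j : ℂ) * (Real.pi : ℂ) := by push_cast; ring
    have h2 : ((Real.pi * k * 4 / 4 : ℝ) : ℂ) = (k : ℂ) * (Real.pi : ℂ) := by push_cast; ring
    rw [h1, h2, Complex.sin_int_mul_pi, Complex.sin_int_mul_pi]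
    ring
  · intro t x
    simp only [triangleBasis]
    ring
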